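/- Let n ≥ 2 and let E be an Eisenstein polynomial of degree e over W. If f, s ∈ W[[u]] satisfy f·s ≡ E (mod p^n), then there exist a unit b of W and a power series g ∈ W[[u]] with constant coefficient 1 such that either f·g ≡ b·φ(g) (mod p^n) or f·g ≡ b·E·φ(g) (mod p^n). -/

import Mathlib

open PowerSeries

/-- The Frobenius-semilinear map `φ` on `W(k)[[u]]`, sending `Σ wᵢ uⁱ` to `Σ F(wᵢ) u^{p·i}`,
where `F = WittVector.frobenius` is the Witt-vector Frobenius. -/
noncomputable def phiPS (p : ℕ) [Fact p.Prime] {k : Type*} [CommRing k]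
    (g : PowerSeries (WittVector p k)) : PowerSeries (WittVector p k) :=
  PowerSeries.mk fun j =>
    if p ∣ j then WittVector.frobenius (PowerSeries.coeff (j / p) g) else 0

/-- Coefficients of the unique solution `g` (with `g₀ = 1`) of `g = a · φ(g)`,
for `a` a power series with constant coefficient `1`. -/
noncomputable def bkCoeff (p : ℕ) [hp : Fact p.Prime] {k : Type*} [CommRing k]
    (a : PowerSeries (WittVector p k)) : ℕ → WittVector p k
  | 0 => 1
  | (j+1) => ∑ i ∈ Finset.range (j+2),
      PowerSeries.coeff i a *
        (if p ∣ (j+1-i) then WittVector.frobenius (bkCoeff p a ((j+1-i) / p)) else 0)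
  decreasing_by
    exact lt_of_le_of_lt (Nat.div_le_div_right (Nat.sub_le _ _))
      (Nat.div_lt_self (Nat.succ_pos j) hp.out.one_lt)

/-- The fixed-point property: `mk (bkCoeff p a) = a * φ(mk (bkCoeff p a))`. -/
theorem bkCoeff_spec (p : ℕ) [Fact p.Prime] {k : Type*} [CommRing k]
    (a : PowerSeries (WittVector p k)) (ha : constantCoeff a = 1) :
    PowerSeries.mk (bkCoeff p a) = a * phiPS p (PowerSeries.mk (bkCoeff p a)) := by
  apply PowerSeries.ext; intro j
  rw [coeff_mk, PowerSeries.coeff_mul]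
  have hphi : ∀ m : ℕ, coeff m (phiPS p (PowerSeries.mk (bkCoeff p a)))
      = if p ∣ m then WittVector.frobenius (bkCoeff p a (m / p)) else 0 := by
    intro m; rw [phiPS, coeff_mk, coeff_mk]
  cases j with
  | zero =>
    rw [Finset.Nat.antidiagonal_zero, Finset.sum_singleton]
    simp only [hphi, Nat.dvd_zero, if_true, Nat.zero_div]
    rw [coeff_zero_eq_constantCoeff, ha, bkCoeff, map_one, one_mul]
  | succ j =>
    rw [Finset.Nat.sum_antidiagonal_eq_sum_range_succ
      (fun x y => (coeff x a) *
        (coeff y (phiPS p (PowerSeries.mk (bkCoeff p a))))) (j+1)]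
    rw [bkCoeff, Nat.succ_eq_add_one]
    exact Finset.sum_congr rfl fun i _ => by rw [hphi]

/-- In `W(k)` for `k` a perfect field of characteristic `p`, every nonunit is divisible by
`p`. -/
theorem nonunit_dvd_p {p : ℕ} [Fact p.Prime] {k : Type*} [Field k] [CharP k p]
    [PerfectRing k p] {x : WittVector p k} (hx : ¬ IsUnit x) : (p : WittVector p k) ∣ x := by
  have : IsDiscreteValuationRing (WittVector p k) := WittVector.isDiscreteValuationRing
  have h := (WittVector.irreducible p (k := k)).maximalIdeal_eq
  rw [← Ideal.mem_span_singleton, ← h, IsLocalRing.mem_maximalIdeal]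
  exact hx

/-- **Classification of cyclic Breuil–Kisin modules for `n ≥ 2`.**
Let `W = W(k)` for `k` a perfect field of characteristic `p`, `n ≥ 2`, and
`E = u^e + p·F₀` an Eisenstein polynomial of degree `e ≥ 1` over `W`.  If
`f, s ∈ W[[u]]` satisfy `f·s ≡ E (mod pⁿ)`, then there exist a unit `b` of `W` and
`g ∈ W[[u]]` with constant coefficient `1` such that either `f·g ≡ b·φ(g) (mod pⁿ)`
(multiplicative type) or `f·g ≡ b·E·φ(g) (mod pⁿ)` (étale type). -/
theorem cyclic_BK_classification
    (p n : ℕ) [Fact p.Prime] (hn : 2 ≤ n)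
    (k : Type*) [Field k] [CharP k p] [PerfectRing k p]
    (e : ℕ) (he : 1 ≤ e)
    (F0 : PowerSeries (WittVector p k))
    (hF0deg : ∀ i : ℕ, e ≤ i → coeff i F0 = 0)
    (hc0 : IsUnit (constantCoeff F0))
    (f s : PowerSeries (WittVector p k))
    (hfs : ∀ j : ℕ, (p : WittVector p k) ^ n ∣
        coeff j
          (f * s - (X ^ e + C (p : WittVector p k) * F0))) :
    ∃ (b : WittVector p k) (g : PowerSeries (WittVector p k)),
      IsUnit b ∧ constantCoeff g = 1 ∧
      ((∀ j : ℕ, (p : WittVector p k) ^ n ∣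
          coeff j (f * g - C b * phiPS p g)) ∨
       (∀ j : ℕ, (p : WittVector p k) ^ n ∣
          coeff j
            (f * g - C b *
              (X ^ e + C (p : WittVector p k) * F0) * phiPS p g))) := by
  classical
  set E : PowerSeries (WittVector p k) :=
    X ^ e + C (p : WittVector p k) * F0 with hE
  have hpne : (p : WittVector p k) ≠ 0 := (WittVector.irreducible p (k := k)).ne_zero
  -- either f or s has unit constant coefficient
  have hor : IsUnit (constantCoeff f) ∨
      IsUnit (constantCoeff s) := by
    by_contra hcon
    push_neg at hcon
    obtain ⟨hf0, hs0⟩ := hcon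
    obtain ⟨x, hx⟩ := nonunit_dvd_p hf0
    obtain ⟨y, hy⟩ := nonunit_dvd_p hs0
    have h0 : coeff 0 (f * s - E) =
        constantCoeff f * constantCoeff s -
          (p : WittVector p k) * constantCoeff F0 := by
      rw [hE]
      simp only [map_sub, map_add, map_mul, coeff_zero_eq_constantCoeff]
      rw [map_pow, constantCoeff_X, zero_pow (by omega : e ≠ 0), constantCoeff_C, zero_add]
    obtain ⟨w, hw⟩ := hfs 0
    rw [h0, hx, hy] at hw
    have hn1 : (p : WittVector p k) ^ n =
        (p : WittVector p k) * ((p : WittVector p k) *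
          (p : WittVector p k) ^ (n - 2)) := by
      conv_lhs => rw [show n = 1 + (1 + (n - 2)) by omega, pow_add, pow_add, pow_one]
    rw [hn1] at hw
    have hc : constantCoeff F0 =
        (p : WittVector p k) * (x * y) -
          ((p : WittVector p k) * (p : WittVector p k) ^ (n - 2)) * w := by
      apply mul_left_cancel₀ hpne
      linear_combination -hw
    have hdvd : (p : WittVector p k) ∣ constantCoeff F0 :=
      ⟨x * y - (p : WittVector p k) ^ (n - 2) * w, by rw [hc]; ring⟩
    exact (WittVector.irreducible p (k := k)).not_isUnit (isUnit_of_dvd_unit hdvd hc0)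
  rcases hor with hf0 | hs0
  · -- multiplicative type
    obtain ⟨u, hu⟩ := hf0
    set a : PowerSeries (WittVector p k) :=
      C (↑u : WittVector p k) * PowerSeries.invOfUnit f u with haDef
    have ha : constantCoeff a = 1 := by
      rw [haDef, map_mul, constantCoeff_C, constantCoeff_invOfUnit, Units.mul_inv]
    set g : PowerSeries (WittVector p k) := PowerSeries.mk (bkCoeff p a) with hgDef
    have hg : g = a * phiPS p g := by rw [hgDef]; exact bkCoeff_spec p a ha
    refine ⟨↑u, g, u.isUnit, ?_, Or.inl ?_⟩
    · rw [hgDef, constantCoeff_mk]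
      rw [bkCoeff]
    · intro j
      have hfg : f * g = C (↑u : WittVector p k) * phiPS p g := by
        conv_lhs => rw [hg]
        rw [haDef, show f * (C (↑u : WittVector p k) * PowerSeries.invOfUnit f u * phiPS p g)
            = (f * PowerSeries.invOfUnit f u) * (C (↑u : WittVector p k) * phiPS p g) by ring,
          PowerSeries.mul_invOfUnit f u hu.symm, one_mul]
      rw [hfg, sub_self, map_zero]
      exact dvd_zero _
  · -- étale type
    obtain ⟨u, hu⟩ := hs0
    set a : PowerSeries (WittVector p k) := C (↑u⁻¹ : WittVector p k) * s with haDef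
    have ha : constantCoeff a = 1 := by
      rw [haDef, map_mul, constantCoeff_C, ← hu, Units.inv_mul]
    set g : PowerSeries (WittVector p k) := PowerSeries.mk (bkCoeff p a) with hgDef
    have hg : g = a * phiPS p g := by rw [hgDef]; exact bkCoeff_spec p a ha
    refine ⟨↑u⁻¹, g, (u⁻¹).isUnit, ?_, Or.inr ?_⟩
    · rw [hgDef, constantCoeff_mk]
      rw [bkCoeff]
    · intro j
      have key : f * g - C (↑u⁻¹ : WittVector p k) * E * phiPS p g =
          (f * s - E) * (C (↑u⁻¹ : WittVector p k) * phiPS p g) := by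
        nth_rewrite 1 [hg]
        rw [haDef]; ring
      rw [key, PowerSeries.coeff_mul]
      exact Finset.dvd_sum fun ij _ => dvd_mul_of_dvd_left (hfs ij.1) _
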